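/- Strict contraction under T²: if F : ℝ → (0,1) is non-increasing, right-continuous, with F̂(x) = x + ln(F(x)/(1-F(x))) bounded and not constant, then inf_{ℝ} F̂ < inf_{ℝ} (T²F)^ and sup_{ℝ} (T²F)^ < sup_{ℝ} F̂, where (TF)(x) = exp(-∫_{-x}^{∞} F(u) du) and (T²F)^ denotes the transform of T²F. -/

import Mathlib

open MeasureTheory Set Filter

/-- The logistic tail distribution function. -/
noncomputable def Fstar (x : ℝ) : ℝ := 1 / (1 + Real.exp x)

/-- The BP operator `T`: `(TF)(x) = exp (-∫_{-x}^∞ F)`, with the convention `exp (-∞) = 0`. -/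
noncomputable def Tmap (F : ℝ → ℝ) (x : ℝ) : ℝ :=
  if (∫⁻ u in Ioi (-x), ENNReal.ofReal (F u)) = ⊤ then 0
  else Real.exp (-((∫⁻ u in Ioi (-x), ENNReal.ofReal (F u)).toReal))

/-- The hat transform of a tail distribution function. -/
noncomputable def hatT (F : ℝ → ℝ) (x : ℝ) : ℝ := x + Real.log (F x / (1 - F x))

lemma Fstar_pos (x : ℝ) : 0 < Fstar x := by
  have := Real.exp_pos x; unfold Fstar; positivity

lemma Fstar_lt_one (x : ℝ) : Fstar x < 1 := by
  have h := Real.exp_pos x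
  rw [Fstar, div_lt_one (by linarith)]; linarith

lemma Fstar_anti : Antitone Fstar := by
  intro s t hst
  have h1 : (0:ℝ) < 1 + Real.exp s := by have := Real.exp_pos s; linarith
  have h2 : Real.exp s ≤ Real.exp t := Real.exp_le_exp.2 hst
  exact one_div_le_one_div_of_le h1 (by linarith)

lemma Fstar_strictAnti : StrictAnti Fstar := by
  intro s t hst
  have h1 : (0:ℝ) < 1 + Real.exp s := by have := Real.exp_pos s; linarith
  have h2 : Real.exp s < Real.exp t := Real.exp_lt_exp.2 hst
  exact one_div_lt_one_div_of_lt h1 (by linarith)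

lemma Fstar_eq_exp (t : ℝ) : Fstar t = Real.exp (-(Real.log (1 + Real.exp t))) := by
  have h : (0:ℝ) < 1 + Real.exp t := by have := Real.exp_pos t; linarith
  rw [Real.exp_neg, Real.exp_log h, Fstar, one_div]

/-- From a logit lower bound to an `Fstar` lower bound. -/
lemma Fstar_le_of {p s : ℝ} (hp : 0 < p) (hp1 : p < 1) (h : -s ≤ Real.log (p / (1 - p))) :
    Fstar s ≤ p := by
  have h1 : (0:ℝ) < 1 - p := by linarith
  have hd : 0 < p / (1 - p) := div_pos hp h1
  have h2 : Real.exp (-s) ≤ p / (1 - p) := by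
    calc Real.exp (-s) ≤ Real.exp (Real.log (p / (1 - p))) := Real.exp_le_exp.2 h
    _ = p / (1 - p) := Real.exp_log hd
  have h3 : Real.exp (-s) * (1 - p) ≤ p := by
    have := (le_div_iff₀ h1).mp h2; linarith
  have hes := Real.exp_pos s
  have hmul : Real.exp s * Real.exp (-s) = 1 := by
    rw [← Real.exp_add, add_neg_cancel, Real.exp_zero]
  rw [Fstar, div_le_iff₀ (by linarith)]
  nlinarith [Real.exp_pos (-s), mul_le_mul_of_nonneg_left h3 hes.le]

/-- From a logit upper bound to an `Fstar` upper bound. -/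
lemma le_Fstar_of {p s : ℝ} (hp : 0 < p) (hp1 : p < 1) (h : Real.log (p / (1 - p)) ≤ -s) :
    p ≤ Fstar s := by
  have h1 : (0:ℝ) < 1 - p := by linarith
  have hd : 0 < p / (1 - p) := div_pos hp h1
  have h2 : p / (1 - p) ≤ Real.exp (-s) := by
    calc p / (1 - p) = Real.exp (Real.log (p / (1 - p))) := (Real.exp_log hd).symm
    _ ≤ Real.exp (-s) := Real.exp_le_exp.2 h
  have h3 : p ≤ Real.exp (-s) * (1 - p) := by
    have := (div_le_iff₀ h1).mp h2; linarith
  have hes := Real.exp_pos s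
  have hmul : Real.exp s * Real.exp (-s) = 1 := by
    rw [← Real.exp_add, add_neg_cancel, Real.exp_zero]
  rw [Fstar, le_div_iff₀ (by linarith)]
  nlinarith [Real.exp_pos (-s), mul_le_mul_of_nonneg_left h3 hes.le]

lemma hasDerivAt_aux (c u : ℝ) :
    HasDerivAt (fun v => -Real.log (1 + Real.exp (-(v + c)))) (Fstar (u + c)) u := by
  have h1 : HasDerivAt (fun v : ℝ => -(v + c)) (-1) u := by
    exact ((hasDerivAt_id u).add_const c).neg
  have h2 := h1.exp
  have h3 : HasDerivAt (fun v => 1 + Real.exp (-(v + c)))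
      (Real.exp (-(u + c)) * (-1)) u := (h2.const_add 1)
  have hpos : 0 < 1 + Real.exp (-(u + c)) := by have := Real.exp_pos (-(u+c)); linarith
  have h4 : HasDerivAt (fun v => -Real.log (1 + Real.exp (-(v + c)))) _ u :=
    (h3.log (ne_of_gt hpos)).neg
  convert h4 using 1
  have hmul : Real.exp (u + c) * Real.exp (-(u + c)) = 1 := by
    rw [← Real.exp_add, add_neg_cancel, Real.exp_zero]
  have hpos2 : 0 < Real.exp (-(u+c)) := Real.exp_pos _
  have hpos3 : 0 < 1 + Real.exp (u+c) := by have := Real.exp_pos (u+c); linarith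
  rw [Fstar]
  rw [show -(Real.exp (-(u + c)) * -1 / (1 + Real.exp (-(u + c)))) =
      Real.exp (-(u+c)) / (1 + Real.exp (-(u+c))) by ring]
  rw [div_eq_div_iff (ne_of_gt hpos3) (ne_of_gt hpos)]
  nlinarith [hmul]

lemma tendsto_aux (c : ℝ) :
    Tendsto (fun v => -Real.log (1 + Real.exp (-(v + c)))) atTop (nhds 0) := by
  have h1 : Tendsto (fun v : ℝ => -(v + c)) atTop atBot := by
    apply tendsto_neg_atBot_iff.2; exact tendsto_atTop_add_const_right _ c tendsto_id
  have h2 : Tendsto (fun v : ℝ => Real.exp (-(v + c))) atTop (nhds 0) :=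
    Real.tendsto_exp_atBot.comp h1
  have h3 : Tendsto (fun v : ℝ => 1 + Real.exp (-(v + c))) atTop (nhds 1) := by
    simpa using (tendsto_const_nhds (x := (1:ℝ))).add h2
  have h4 : Tendsto (fun v : ℝ => Real.log (1 + Real.exp (-(v + c)))) atTop (nhds 0) := by
    have := (Real.continuousAt_log (by norm_num : (1:ℝ) ≠ 0)).tendsto.comp h3
    simpa [Function.comp_def] using this
  simpa using h4.neg

lemma cwa_aux (a c : ℝ) :
    ContinuousWithinAt (fun v => -Real.log (1 + Real.exp (-(v + c)))) (Ici a) a :=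
  ((hasDerivAt_aux c a).continuousAt).continuousWithinAt

lemma integral_Fstar (a c : ℝ) :
    ∫ u in Ioi a, Fstar (u + c) = Real.log (1 + Real.exp (-(a + c))) := by
  have h := integral_Ioi_of_hasDerivAt_of_nonneg (cwa_aux a c)
    (fun x _ => hasDerivAt_aux c x) (fun x _ => (Fstar_pos (x + c)).le) (tendsto_aux c)
  rw [h]; ring

lemma integrableOn_Fstar (a c : ℝ) : IntegrableOn (fun u => Fstar (u + c)) (Ioi a) := by
  exact integrableOn_Ioi_deriv_of_nonneg (cwa_aux a c)
    (fun x _ => hasDerivAt_aux c x) (fun x _ => (Fstar_pos (x + c)).le) (tendsto_aux c)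

lemma integrableOn_of_le {f g : ℝ → ℝ} {s : Set ℝ} (hmeas : Measurable f)
    (hg : IntegrableOn g s) (h0 : ∀ u, 0 ≤ f u) (h1 : ∀ u, f u ≤ g u) :
    IntegrableOn f s := by
  apply hg.mono' hmeas.aestronglyMeasurable.restrict
  filter_upwards with u
  rw [Real.norm_eq_abs, abs_of_nonneg (h0 u)]; exact h1 u

lemma Tmap_eq {f : ℝ → ℝ} {x : ℝ} (h0 : ∀ u, 0 ≤ f u) (hi : IntegrableOn f (Ioi (-x))) :
    Tmap f x = Real.exp (-(∫ u in Ioi (-x), f u)) := by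
  have h := ofReal_integral_eq_lintegral_ofReal hi (ae_of_all _ h0)
  have hnn : 0 ≤ ∫ u in Ioi (-x), f u := integral_nonneg h0
  rw [Tmap, ← h, if_neg ENNReal.ofReal_ne_top, ENNReal.toReal_ofReal hnn]

lemma integral_add_indicator_const (a c p q κ : ℝ) (hpq : p ≤ q) (hap : a < p) :
    ∫ u in Ioi a, (Fstar (u + c) + (Ico p q).indicator (fun _ => κ) u) =
      Real.log (1 + Real.exp (-(a + c))) + (q - p) * κ := by
  have hsub : Ico p q ⊆ Ioi a := fun u hu => lt_of_lt_of_le hap hu.1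
  have hind : Integrable ((Ico p q).indicator (fun _ => κ)) volume := by
    apply IntegrableOn.integrable_indicator _ measurableSet_Ico
    exact (integrableOn_const_iff).mpr (Or.inr (by rw [Real.volume_Ico]; exact ENNReal.ofReal_lt_top))
  rw [integral_add (integrableOn_Fstar a c) hind.integrableOn,
    integral_Fstar, setIntegral_indicator measurableSet_Ico,
    Set.inter_eq_self_of_subset_right hsub, setIntegral_const, measureReal_def, Real.volume_Ico,
    ENNReal.toReal_ofReal (by linarith), smul_eq_mul]

lemma integral_add_mul_indicator (a c p r : ℝ) (hap : a ≤ p) :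
    ∫ u in Ioi a, (Fstar (u + c) + r * (Ioi p).indicator (fun v => Fstar (v + c)) u) =
      Real.log (1 + Real.exp (-(a + c))) + r * Real.log (1 + Real.exp (-(p + c))) := by
  have hind : Integrable ((Ioi p).indicator (fun v => Fstar (v + c))) volume :=
    (integrableOn_Fstar p c).integrable_indicator measurableSet_Ioi
  have hind2 : Integrable (fun u => r * (Ioi p).indicator (fun v => Fstar (v + c)) u) volume :=
    hind.const_mul r
  rw [integral_add (integrableOn_Fstar a c) hind2.integrableOn, integral_Fstar,
    integral_const_mul, setIntegral_indicator measurableSet_Ioi, Ioi_inter_Ioi,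
    sup_eq_right.mpr hap, integral_Fstar]

lemma exists_Ico_gt {f : ℝ → ℝ} {x₀ v : ℝ} (hc : ContinuousWithinAt f (Ici x₀) x₀)
    (h : v < f x₀) : ∃ η > 0, ∀ u ∈ Ico x₀ (x₀ + η), v < f u := by
  have hev : f ⁻¹' (Ioi v) ∈ nhdsWithin x₀ (Ici x₀) := hc (Ioi_mem_nhds h)
  obtain ⟨ε, hε, hsub⟩ := Metric.mem_nhdsWithin_iff.mp hev
  refine ⟨ε / 2, by linarith, fun u hu => ?_⟩
  have hmem : u ∈ Metric.ball x₀ ε ∩ Ici x₀ := by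
    constructor
    · rw [Metric.mem_ball, Real.dist_eq, abs_of_nonneg (by linarith [hu.1])]
      linarith [hu.2]
    · exact hu.1
  exact hsub hmem

lemma exists_Ico_lt {f : ℝ → ℝ} {x₀ v : ℝ} (hc : ContinuousWithinAt f (Ici x₀) x₀)
    (h : f x₀ < v) : ∃ η > 0, ∀ u ∈ Ico x₀ (x₀ + η), f u < v := by
  have hev : f ⁻¹' (Iio v) ∈ nhdsWithin x₀ (Ici x₀) := hc (Iio_mem_nhds h)
  obtain ⟨ε, hε, hsub⟩ := Metric.mem_nhdsWithin_iff.mp hev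
  refine ⟨ε / 2, by linarith, fun u hu => ?_⟩
  have hmem : u ∈ Metric.ball x₀ ε ∩ Ici x₀ := by
    constructor
    · rw [Metric.mem_ball, Real.dist_eq, abs_of_nonneg (by linarith [hu.1])]
      linarith [hu.2]
    · exact hu.1
  exact hsub hmem


set_option maxHeartbeats 2000000 in
theorem strict_contraction (F : ℝ → ℝ) (hanti : Antitone F)
    (hrc : ∀ x, ContinuousWithinAt F (Ici x) x)
    (hr : ∀ x, F x ∈ Ioo (0:ℝ) 1)
    (hbdd : BddAbove (Set.range (hatT F)) ∧ BddBelow (Set.range (hatT F)))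
    (hnc : ¬ ∃ c : ℝ, ∀ x, hatT F x = c) :
    sInf (Set.range (hatT F)) < sInf (Set.range (hatT (Tmap (Tmap F)))) ∧
    sSup (Set.range (hatT (Tmap (Tmap F)))) < sSup (Set.range (hatT F)) := by
  obtain ⟨hA, hB⟩ := hbdd
  set m := sInf (Set.range (hatT F)) with hm
  set M := sSup (Set.range (hatT F)) with hM
  have hmle : ∀ x, m ≤ hatT F x := fun x => csInf_le hB ⟨x, rfl⟩
  have hleM : ∀ x, hatT F x ≤ M := fun x => le_csSup hA ⟨x, rfl⟩
  have hF0 : ∀ u, 0 < F u := fun u => (hr u).1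
  have hF1 : ∀ u, F u < 1 := fun u => (hr u).2
  have hFm : ∀ u, Fstar (u + -m) ≤ F u := by
    intro u
    apply Fstar_le_of (hF0 u) (hF1 u)
    have h := hmle u; simp only [hatT] at h; linarith
  have hFM : ∀ u, F u ≤ Fstar (u + -M) := by
    intro u
    apply le_Fstar_of (hF0 u) (hF1 u)
    have h := hleM u; simp only [hatT] at h; linarith
  have hFmeas : Measurable F := hanti.measurable
  have hFint : ∀ a : ℝ, IntegrableOn F (Ioi a) := fun a =>
    integrableOn_of_le hFmeas (integrableOn_Fstar a (-M)) (fun u => (hF0 u).le) hFM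
  set I : ℝ → ℝ := fun x => ∫ u in Ioi (-x), F u with hI
  have hTF : ∀ x, Tmap F x = Real.exp (-(I x)) := fun x =>
    Tmap_eq (fun u => (hF0 u).le) (hFint _)
  have hIlb : ∀ x, Real.log (1 + Real.exp (x + m)) ≤ I x := by
    intro x
    have h := setIntegral_mono_on (integrableOn_Fstar (-x) (-m)) (hFint (-x))
      measurableSet_Ioi (fun u _ => hFm u)
    rw [integral_Fstar, show -(-x + -m) = x + m by ring] at h
    exact h
  have hIub : ∀ x, I x ≤ Real.log (1 + Real.exp (x + M)) := by
    intro x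
    have h := setIntegral_mono_on (hFint (-x)) (integrableOn_Fstar (-x) (-M))
      measurableSet_Ioi (fun u _ => hFM u)
    rw [integral_Fstar, show -(-x + -M) = x + M by ring] at h
    exact h
  -- right continuity of the hat transform
  have hrcT : ∀ p : ℝ, ContinuousWithinAt (hatT F) (Ici p) p := by
    intro p
    have h1p : (0:ℝ) < 1 - F p := by linarith [hF1 p]
    have hne : F p / (1 - F p) ≠ 0 := ne_of_gt (div_pos (hF0 p) h1p)
    have hd : ContinuousAt (fun t : ℝ => t / (1 - t)) (F p) :=
      ContinuousAt.div continuousAt_id (continuousAt_const.sub continuousAt_id)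
        (by intro hc; have : (1 : ℝ) - F p = 0 := hc; linarith)
    have h1 : ContinuousAt (fun t : ℝ => Real.log (t / (1 - t))) (F p) :=
      hd.log hne
    have : ContinuousWithinAt (fun x => x + Real.log (F x / (1 - F x))) (Ici p) p :=
      continuousWithinAt_id.add (h1.comp_continuousWithinAt (hrc p))
    exact this
  -- lower-side interval gain
  obtain ⟨x₀, hx₀⟩ : ∃ x, m < hatT F x := by
    by_contra hcon; push_neg at hcon
    exact hnc ⟨m, fun x => le_antisymm (hcon x) (hmle x)⟩
  set δ := (hatT F x₀ - m) / 2 with hδ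
  have hδpos : 0 < δ := by rw [hδ]; linarith
  obtain ⟨η₀, hη₀, hIco0⟩ := exists_Ico_gt (hrcT x₀) (show m + δ < hatT F x₀ by rw [hδ]; linarith)
  set η := min η₀ (δ / 2) with hηdef
  have hη : 0 < η := lt_min hη₀ (by linarith)
  have hηδ : η < δ := lt_of_le_of_lt (min_le_right _ _) (by linarith)
  set κ := Fstar (x₀ + η + -(m + δ)) - Fstar (x₀ + -m) with hκ
  have hκpos : 0 < κ := sub_pos.2 (Fstar_strictAnti (by linarith))
  have key1 : ∀ u, Fstar (u + -m) + (Ico x₀ (x₀ + η)).indicator (fun _ => κ) u ≤ F u := by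
    intro u
    by_cases hu : u ∈ Ico x₀ (x₀ + η)
    · rw [indicator_of_mem hu]
      have h1 : Fstar (u + -(m + δ)) ≤ F u := by
        apply Fstar_le_of (hF0 u) (hF1 u)
        have hu' : u ∈ Ico x₀ (x₀ + η₀) :=
          ⟨hu.1, lt_of_lt_of_le hu.2 (by have := min_le_left η₀ (δ/2); simp only [hηdef]; linarith)⟩
        have h := (hIco0 u hu').le; simp only [hatT] at h; linarith
      have h2 : Fstar (x₀ + η + -(m + δ)) ≤ Fstar (u + -(m + δ)) :=
        Fstar_anti (by linarith [hu.2.le])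
      have h3 : Fstar (u + -m) ≤ Fstar (x₀ + -m) := Fstar_anti (by linarith [hu.1])
      rw [hκ]; linarith
    · rw [indicator_of_notMem hu, add_zero]; exact hFm u
  set c := η * κ with hc
  have hcpos : 0 < c := mul_pos hη hκpos
  have hgain1 : ∀ x, 1 - x₀ ≤ x → Real.log (1 + Real.exp (x + m)) + c ≤ I x := by
    intro x hx
    have hind : Integrable ((Ico x₀ (x₀ + η)).indicator (fun _ => κ)) volume := by
      apply IntegrableOn.integrable_indicator _ measurableSet_Ico
      exact (integrableOn_const_iff).mpr (Or.inr (by rw [Real.volume_Ico]; exact ENNReal.ofReal_lt_top))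
    have hint2 : IntegrableOn
        (fun u => Fstar (u + -m) + (Ico x₀ (x₀ + η)).indicator (fun _ => κ) u) (Ioi (-x)) :=
      (integrableOn_Fstar (-x) (-m)).add hind.integrableOn
    have hmono := setIntegral_mono_on hint2 (hFint (-x))
      measurableSet_Ioi (fun u _ => key1 u)
    rw [integral_add_indicator_const (-x) (-m) x₀ (x₀ + η) κ (by linarith) (by linarith)] at hmono
    rw [show -(-x + -m) = x + m by ring, show x₀ + η - x₀ = η by ring] at hmono
    rw [hc]; exact hmono
  -- upper-side interval gain
  obtain ⟨x₁, hx₁⟩ : ∃ x, hatT F x < M := by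
    by_contra hcon; push_neg at hcon
    exact hnc ⟨M, fun x => le_antisymm (hleM x) (hcon x)⟩
  set δ' := (M - hatT F x₁) / 2 with hδ'
  have hδ'pos : 0 < δ' := by rw [hδ']; linarith
  obtain ⟨η₁, hη₁, hIco1⟩ := exists_Ico_lt (hrcT x₁) (show hatT F x₁ < M - δ' by rw [hδ']; linarith)
  set η' := min η₁ (δ' / 2) with hη'def
  have hη' : 0 < η' := lt_min hη₁ (by linarith)
  have hη'δ : η' < δ' := lt_of_le_of_lt (min_le_right _ _) (by linarith)
  set κ' := Fstar (x₁ + η' + -M) - Fstar (x₁ + -(M - δ')) with hκ'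
  have hκ'pos : 0 < κ' := sub_pos.2 (Fstar_strictAnti (by linarith))
  have key2 : ∀ u, F u ≤ Fstar (u + -M) + (Ico x₁ (x₁ + η')).indicator (fun _ => -κ') u := by
    intro u
    by_cases hu : u ∈ Ico x₁ (x₁ + η')
    · rw [indicator_of_mem hu]
      have h1 : F u ≤ Fstar (u + -(M - δ')) := by
        apply le_Fstar_of (hF0 u) (hF1 u)
        have hu' : u ∈ Ico x₁ (x₁ + η₁) :=
          ⟨hu.1, lt_of_lt_of_le hu.2 (by have := min_le_left η₁ (δ'/2); simp only [hη'def]; linarith)⟩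
        have h := (hIco1 u hu').le; simp only [hatT] at h; linarith
      have h2 : Fstar (u + -(M - δ')) ≤ Fstar (x₁ + -(M - δ')) := Fstar_anti (by linarith [hu.1])
      have h3 : Fstar (x₁ + η' + -M) ≤ Fstar (u + -M) := Fstar_anti (by linarith [hu.2.le])
      rw [hκ'] at *; linarith
    · rw [indicator_of_notMem hu, add_zero]; exact hFM u
  set c' := η' * κ' with hc'
  have hc'pos : 0 < c' := mul_pos hη' hκ'pos
  have hgain2 : ∀ x, 1 - x₁ ≤ x → I x ≤ Real.log (1 + Real.exp (x + M)) - c' := by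
    intro x hx
    have hind : Integrable ((Ico x₁ (x₁ + η')).indicator (fun _ => (-κ' : ℝ))) volume := by
      apply IntegrableOn.integrable_indicator _ measurableSet_Ico
      exact (integrableOn_const_iff).mpr (Or.inr (by rw [Real.volume_Ico]; exact ENNReal.ofReal_lt_top))
    have hint2 : IntegrableOn
        (fun u => Fstar (u + -M) + (Ico x₁ (x₁ + η')).indicator (fun _ => -κ') u) (Ioi (-x)) :=
      (integrableOn_Fstar (-x) (-M)).add hind.integrableOn
    have hmono := setIntegral_mono_on (hFint (-x)) hint2
      measurableSet_Ioi (fun u _ => key2 u)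
    rw [integral_add_indicator_const (-x) (-M) x₁ (x₁ + η') (-κ') (by linarith) (by linarith)] at hmono
    rw [show -(-x + -M) = x + M by ring, show x₁ + η' - x₁ = η' by ring] at hmono
    rw [hc']; linarith
  -- properties of G := Tmap F
  have hG0 : ∀ x, 0 < Tmap F x := by intro x; rw [hTF x]; exact Real.exp_pos _
  have hGanti : Antitone (Tmap F) := by
    intro x y hxy
    rw [hTF x, hTF y]
    apply Real.exp_le_exp.2
    apply neg_le_neg
    apply setIntegral_mono_set (hFint (-y)) (ae_of_all _ (fun u => (hF0 u).le))
    exact HasSubset.Subset.eventuallyLE (Ioi_subset_Ioi (neg_le_neg hxy))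
  have hGub : ∀ x, Tmap F x ≤ Fstar (x + m) := by
    intro x
    rw [hTF x, Fstar_eq_exp]
    exact Real.exp_le_exp.2 (neg_le_neg (by simpa using hIlb x))
  have hGlb : ∀ x, Fstar (x + M) ≤ Tmap F x := by
    intro x
    rw [hTF x, Fstar_eq_exp]
    exact Real.exp_le_exp.2 (neg_le_neg (by simpa using hIub x))
  have hGub2 : ∀ x, 1 - x₀ ≤ x → Tmap F x ≤ Real.exp (-c) * Fstar (x + m) := by
    intro x hx
    rw [hTF x, Fstar_eq_exp, ← Real.exp_add]
    exact Real.exp_le_exp.2 (by linarith [hgain1 x hx])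
  have hGlb2 : ∀ x, 1 - x₁ ≤ x → Real.exp c' * Fstar (x + M) ≤ Tmap F x := by
    intro x hx
    rw [hTF x, Fstar_eq_exp, ← Real.exp_add]
    exact Real.exp_le_exp.2 (by have := hgain2 x hx; linarith)
  have hGmeas : Measurable (Tmap F) := hGanti.measurable
  have hGint : ∀ a : ℝ, IntegrableOn (Tmap F) (Ioi a) := fun a =>
    integrableOn_of_le hGmeas (integrableOn_Fstar a m) (fun u => (hG0 u).le) hGub
  -- second application
  set K : ℝ → ℝ := fun y => ∫ u in Ioi (-y), Tmap F u with hK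
  have hH : ∀ y, Tmap (Tmap F) y = Real.exp (-(K y)) := fun y =>
    Tmap_eq (fun u => (hG0 u).le) (hGint _)
  have hKub : ∀ y, K y ≤ Real.log (1 + Real.exp (y - m)) := by
    intro y
    have h := setIntegral_mono_on (hGint (-y)) (integrableOn_Fstar (-y) m)
      measurableSet_Ioi (fun u _ => hGub u)
    rw [integral_Fstar, show -(-y + m) = y - m by ring] at h
    exact h
  have hKlb : ∀ y, Real.log (1 + Real.exp (y - M)) ≤ K y := by
    intro y
    have h := setIntegral_mono_on (integrableOn_Fstar (-y) M) (hGint (-y))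
      measurableSet_Ioi (fun u _ => hGlb u)
    rw [integral_Fstar, show -(-y + M) = y - M by ring] at h
    exact h
  have hK0 : ∀ y, 0 < K y := fun y =>
    lt_of_lt_of_le (Real.log_pos (by linarith [Real.exp_pos (y - M)])) (hKlb y)
  have hatH : ∀ y, hatT (Tmap (Tmap F)) y = y - Real.log (Real.exp (K y) - 1) := by
    intro y
    have h1 : (0:ℝ) < Real.exp (K y) - 1 := by
      have := Real.add_one_le_exp (K y); have := hK0 y
      nlinarith [Real.add_one_le_exp (K y), hK0 y, Real.exp_pos (K y)]
    have hlt1 : Real.exp (-(K y)) < 1 := by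
      rw [Real.exp_lt_one_iff]; linarith [hK0 y]
    have hmul : Real.exp (K y) * Real.exp (-(K y)) = 1 := by
      rw [← Real.exp_add, add_neg_cancel, Real.exp_zero]
    have h2 : Real.exp (-(K y)) / (1 - Real.exp (-(K y))) = (Real.exp (K y) - 1)⁻¹ := by
      rw [inv_eq_one_div, div_eq_div_iff (by linarith : (1:ℝ) - Real.exp (-(K y)) ≠ 0) (ne_of_gt h1)]
      nlinarith [hmul]
    simp only [hatT]
    rw [hH y, h2, Real.log_inv]
    ring
  -- quantitative bounds on K
  have hKa : ∀ y, y ≤ x₀ - 1 → K y ≤ Real.exp (-c) * Real.log (1 + Real.exp (y - m)) := by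
    intro y hy
    have hint2 : IntegrableOn (fun u => Real.exp (-c) * Fstar (u + m)) (Ioi (-y)) :=
      (integrableOn_Fstar (-y) m).const_mul _
    have h := setIntegral_mono_on (hGint (-y)) hint2 measurableSet_Ioi
      (fun u hu => hGub2 u (by have : -y < u := hu; linarith))
    rw [integral_const_mul, integral_Fstar, show -(-y + m) = y - m by ring] at h
    exact h
  have hKs : ∀ y, x₀ - 1 ≤ y → K y ≤ Real.log (1 + Real.exp (y - m)) -
      (1 - Real.exp (-c)) * Real.log (1 + Real.exp ((x₀ - 1) - m)) := by
    intro y hy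
    have hptwise : ∀ u, Tmap F u ≤ Fstar (u + m) +
        (-(1 - Real.exp (-c))) * (Ioi (1 - x₀)).indicator (fun v => Fstar (v + m)) u := by
      intro u
      by_cases hu : u ∈ Ioi (1 - x₀)
      · rw [indicator_of_mem hu]
        have h1 := hGub2 u (le_of_lt hu)
        nlinarith [Fstar_pos (u + m)]
      · rw [indicator_of_notMem hu]
        have := hGub u; linarith
    have hind : Integrable ((Ioi (1 - x₀)).indicator (fun v => Fstar (v + m))) volume :=
      (integrableOn_Fstar (1 - x₀) m).integrable_indicator measurableSet_Ioi
    have hint2 : IntegrableOn (fun u => Fstar (u + m) +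
        (-(1 - Real.exp (-c))) * (Ioi (1 - x₀)).indicator (fun v => Fstar (v + m)) u)
        (Ioi (-y)) :=
      (integrableOn_Fstar (-y) m).add (hind.const_mul _).integrableOn
    have h := setIntegral_mono_on (hGint (-y)) hint2 measurableSet_Ioi
      (fun u _ => hptwise u)
    rw [integral_add_mul_indicator (-y) m (1 - x₀) _ (by linarith)] at h
    rw [show -(-y + m) = y - m by ring, show -(1 - x₀ + m) = x₀ - 1 - m by ring] at h
    linarith
  have hKb : ∀ y, y ≤ x₁ - 1 → Real.exp c' * Real.log (1 + Real.exp (y - M)) ≤ K y := by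
    intro y hy
    have hint2 : IntegrableOn (fun u => Real.exp c' * Fstar (u + M)) (Ioi (-y)) :=
      (integrableOn_Fstar (-y) M).const_mul _
    have h := setIntegral_mono_on hint2 (hGint (-y)) measurableSet_Ioi
      (fun u hu => hGlb2 u (by have : -y < u := hu; linarith))
    rw [integral_const_mul, integral_Fstar, show -(-y + M) = y - M by ring] at h
    exact h
  have hKt : ∀ y, x₁ - 1 ≤ y → Real.log (1 + Real.exp (y - M)) +
      (Real.exp c' - 1) * Real.log (1 + Real.exp ((x₁ - 1) - M)) ≤ K y := by
    intro y hy
    have hptwise : ∀ u, Fstar (u + M) +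
        (Real.exp c' - 1) * (Ioi (1 - x₁)).indicator (fun v => Fstar (v + M)) u ≤ Tmap F u := by
      intro u
      by_cases hu : u ∈ Ioi (1 - x₁)
      · rw [indicator_of_mem hu]
        have h1 := hGlb2 u (le_of_lt hu)
        nlinarith [Fstar_pos (u + M)]
      · rw [indicator_of_notMem hu]
        have := hGlb u; simp; linarith
    have hind : Integrable ((Ioi (1 - x₁)).indicator (fun v => Fstar (v + M))) volume :=
      (integrableOn_Fstar (1 - x₁) M).integrable_indicator measurableSet_Ioi
    have hint2 : IntegrableOn (fun u => Fstar (u + M) +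
        (Real.exp c' - 1) * (Ioi (1 - x₁)).indicator (fun v => Fstar (v + M)) u)
        (Ioi (-y)) :=
      (integrableOn_Fstar (-y) M).add (hind.const_mul _).integrableOn
    have h := setIntegral_mono_on hint2 (hGint (-y)) measurableSet_Ioi
      (fun u _ => hptwise u)
    rw [integral_add_mul_indicator (-y) M (1 - x₁) _ (by linarith)] at h
    rw [show -(-y + M) = y - M by ring, show -(1 - x₁ + M) = x₁ - 1 - M by ring] at h
    linarith
  -- final estimates
  have hexpK : ∀ y, 0 < Real.exp (K y) - 1 := fun y => by
    nlinarith [Real.add_one_le_exp (K y), hK0 y]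
  have ha1 : Real.exp (-c) < 1 := by rw [Real.exp_lt_one_iff]; linarith
  have ha0 : (0:ℝ) < Real.exp (-c) := Real.exp_pos _
  set yhat := min (x₀ - 1) (m + Real.log (c / (2 * Real.exp (-c)))) with hyhat
  set s := (1 - Real.exp (-c)) * Real.log (1 + Real.exp (yhat - m)) with hs
  have hspos : 0 < s :=
    mul_pos (by linarith) (Real.log_pos (by linarith [Real.exp_pos (yhat - m)]))
  have hbound1 : ∀ y, m + min s (c/2) ≤ hatT (Tmap (Tmap F)) y := by
    intro y
    rw [hatH y]
    have hp1 := hexpK y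
    rcases le_total y yhat with hle | hge
    · -- y small
      have h1 := hKa y (le_trans hle (min_le_left _ _))
      have hlog_le : Real.log (1 + Real.exp (y - m)) ≤ Real.exp (y - m) := by
        have := Real.log_le_sub_one_of_pos (show (0:ℝ) < 1 + Real.exp (y-m) by positivity)
        linarith
      have hq : (0:ℝ) < c / (2 * Real.exp (-c)) := by positivity
      have h3 : Real.exp (y - m) ≤ c / (2 * Real.exp (-c)) := by
        have h := le_trans hle (min_le_right (x₀ - 1) (m + Real.log (c / (2 * Real.exp (-c)))))
        calc Real.exp (y - m) ≤ Real.exp (Real.log (c / (2 * Real.exp (-c)))) :=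
              Real.exp_le_exp.2 (by linarith)
        _ = c / (2 * Real.exp (-c)) := Real.exp_log hq
      have h4eq : Real.exp (-c) * (c / (2 * Real.exp (-c))) = c / 2 := by
        field_simp
      have hKc2 : K y ≤ c / 2 := by
        have e1 := mul_le_mul_of_nonneg_left hlog_le ha0.le
        have e2 := mul_le_mul_of_nonneg_left h3 ha0.le
        linarith
      have h4 : Real.exp (K y) - 1 ≤ K y * Real.exp (c/2) := by
        have e1 := Real.add_one_le_exp (-(K y))
        have e2 : Real.exp (K y) * Real.exp (-(K y)) = 1 := by
          rw [← Real.exp_add, add_neg_cancel, Real.exp_zero]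
        have e3 : Real.exp (K y) - 1 ≤ K y * Real.exp (K y) := by
          nlinarith [Real.exp_pos (K y), mul_le_mul_of_nonneg_left e1 (Real.exp_pos (K y)).le]
        have e4 : Real.exp (K y) ≤ Real.exp (c/2) := Real.exp_le_exp.2 (by linarith)
        nlinarith [hK0 y]
      have h5 : K y * Real.exp (c/2) ≤ Real.exp (y - m - c/2) := by
        have hKe : K y ≤ Real.exp (-c) * Real.exp (y - m) :=
          le_trans h1 (mul_le_mul_of_nonneg_left hlog_le ha0.le)
        have e5 : K y * Real.exp (c/2) ≤ (Real.exp (-c) * Real.exp (y-m)) * Real.exp (c/2) :=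
          mul_le_mul_of_nonneg_right hKe (Real.exp_pos _).le
        have heq : (Real.exp (-c) * Real.exp (y-m)) * Real.exp (c/2) = Real.exp (y - m - c/2) := by
          rw [← Real.exp_add, ← Real.exp_add]; congr 1; ring
        linarith
      have h6 : Real.log (Real.exp (K y) - 1) ≤ y - m - c/2 := by
        have := Real.log_le_log hp1 (le_trans h4 h5)
        rwa [Real.log_exp] at this
      linarith [min_le_right s (c/2)]
    · -- y large
      have hLmono : Real.log (1 + Real.exp (yhat - m)) ≤ Real.log (1 + Real.exp (y - m)) :=
        Real.log_le_log (by positivity)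
          (by linarith [Real.exp_le_exp.2 (show yhat - m ≤ y - m by linarith)])
      have hKy : K y ≤ Real.log (1 + Real.exp (y - m)) - s := by
        rcases le_total y (x₀ - 1) with h | h
        · have h1 := hKa y h
          have h2 : (1 - Real.exp (-c)) * Real.log (1 + Real.exp (yhat - m)) ≤
              (1 - Real.exp (-c)) * Real.log (1 + Real.exp (y - m)) :=
            mul_le_mul_of_nonneg_left hLmono (by linarith)
          nlinarith
        · have h1 := hKs y h
          have h2 : Real.log (1 + Real.exp (yhat - m)) ≤ Real.log (1 + Real.exp ((x₀-1) - m)) :=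
            Real.log_le_log (by positivity)
              (by linarith [Real.exp_le_exp.2 (show yhat - m ≤ (x₀-1) - m by
                  linarith [min_le_left (x₀ - 1) (m + Real.log (c / (2 * Real.exp (-c))))])])
          have h3 : s ≤ (1 - Real.exp (-c)) * Real.log (1 + Real.exp ((x₀-1) - m)) :=
            mul_le_mul_of_nonneg_left h2 (by linarith)
          linarith
      have hLpos : (0:ℝ) < 1 + Real.exp (y - m) := by positivity
      have hs1 : (1:ℝ) ≤ Real.exp s := by
        rw [← Real.exp_zero]; exact Real.exp_le_exp.2 hspos.le
      have key : Real.exp (K y) - 1 ≤ Real.exp (y - m - s) := by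
        have e1 : Real.exp (K y) ≤ Real.exp (Real.log (1 + Real.exp (y-m)) - s) :=
          Real.exp_le_exp.2 hKy
        have e2 : Real.exp (Real.log (1 + Real.exp (y-m)) - s) =
            (1 + Real.exp (y-m)) / Real.exp s := by
          rw [Real.exp_sub, Real.exp_log hLpos]
        have hE := Real.exp_pos s
        have e3 : (1 + Real.exp (y-m)) / Real.exp s - 1 ≤ Real.exp (y-m) / Real.exp s := by
          have hadd : (1 + Real.exp (y-m)) / Real.exp s =
              1 / Real.exp s + Real.exp (y-m) / Real.exp s := add_div 1 _ _
          have h1E : 1 / Real.exp s ≤ 1 := by rw [div_le_one hE]; exact hs1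
          linarith
        have e4 : Real.exp (y-m) / Real.exp s = Real.exp (y - m - s) := (Real.exp_sub _ _).symm
        linarith
      have h6 : Real.log (Real.exp (K y) - 1) ≤ y - m - s := by
        have := Real.log_le_log hp1 key
        rwa [Real.log_exp] at this
      linarith [min_le_left s (c/2)]
  -- upper side
  have hb1 : (1:ℝ) < Real.exp c' := by
    rw [← Real.exp_zero]; exact Real.exp_lt_exp.2 hc'pos
  have hec2 : (0:ℝ) < Real.exp (c'/2) - 1 := by
    have : (1:ℝ) < Real.exp (c'/2) := by
      rw [← Real.exp_zero]; exact Real.exp_lt_exp.2 (by linarith)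
    linarith
  set zhat := min (x₁ - 1) (M + Real.log (Real.exp (c'/2) - 1)) with hzhat
  set t := (Real.exp c' - 1) * Real.log (1 + Real.exp (zhat - M)) with ht
  have htpos : 0 < t :=
    mul_pos (by linarith) (Real.log_pos (by linarith [Real.exp_pos (zhat - M)]))
  have hbound2 : ∀ y, hatT (Tmap (Tmap F)) y ≤ M - min t (c'/2) := by
    intro y
    rw [hatH y]
    have hp1 := hexpK y
    rcases le_total y zhat with hle | hge
    · -- y small
      have h1 := hKb y (le_trans hle (min_le_left _ _))
      have hu0 : (0:ℝ) < Real.exp (y - M) := Real.exp_pos _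
      have hpos : (0:ℝ) < 1 + Real.exp (y - M) := by linarith
      have hΛ : Real.exp (y - M) / (1 + Real.exp (y - M)) ≤ Real.log (1 + Real.exp (y - M)) := by
        have hinv : (0:ℝ) < (1 + Real.exp (y - M))⁻¹ := by positivity
        have hlog := Real.log_le_sub_one_of_pos hinv
        rw [Real.log_inv] at hlog
        have heq : (1 + Real.exp (y - M))⁻¹ - 1 = -(Real.exp (y - M) / (1 + Real.exp (y - M))) := by
          field_simp
          ring
        rw [heq] at hlog; linarith
      have hub : Real.exp (y - M) ≤ Real.exp (c'/2) - 1 := by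
        have h := le_trans hle (min_le_right (x₁ - 1) (M + Real.log (Real.exp (c'/2) - 1)))
        calc Real.exp (y - M) ≤ Real.exp (Real.log (Real.exp (c'/2) - 1)) :=
              Real.exp_le_exp.2 (by linarith)
        _ = Real.exp (c'/2) - 1 := Real.exp_log hec2
      have h2 : Real.exp c' * (Real.exp (y - M) / (1 + Real.exp (y - M))) ≤ K y :=
        le_trans (mul_le_mul_of_nonneg_left hΛ (Real.exp_pos c').le) h1
      have hee : Real.exp (c'/2) * Real.exp (c'/2) = Real.exp c' := by
        rw [← Real.exp_add]; congr 1; ring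
      have h3 : Real.exp (c'/2) * Real.exp (y - M) ≤
          Real.exp c' * (Real.exp (y - M) / (1 + Real.exp (y - M))) := by
        have hub2 : 1 + Real.exp (y - M) ≤ Real.exp (c'/2) := by linarith
        have h3' : Real.exp (c'/2) * (1 + Real.exp (y - M)) ≤ Real.exp c' := by
          nlinarith [mul_le_mul_of_nonneg_left hub2 (Real.exp_pos (c'/2)).le, hee]
        rw [mul_div_assoc', le_div_iff₀ hpos]
        nlinarith [mul_le_mul_of_nonneg_right h3' hu0.le]
      have h4 : Real.exp (y - M + c'/2) ≤ K y := by
        have heq : Real.exp (y - M + c'/2) = Real.exp (c'/2) * Real.exp (y - M) := by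
          rw [← Real.exp_add]; congr 1; ring
        linarith
      have h5 : Real.exp (y - M + c'/2) ≤ Real.exp (K y) - 1 := by
        have := Real.add_one_le_exp (K y); linarith
      have h6 : y - M + c'/2 ≤ Real.log (Real.exp (K y) - 1) := by
        have := Real.log_le_log (Real.exp_pos (y - M + c'/2)) h5
        rwa [Real.log_exp] at this
      linarith [min_le_right t (c'/2)]
    · -- y large
      have hΛmono : Real.log (1 + Real.exp (zhat - M)) ≤ Real.log (1 + Real.exp (y - M)) :=
        Real.log_le_log (by positivity)
          (by linarith [Real.exp_le_exp.2 (show zhat - M ≤ y - M by linarith)])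
      have hKy : Real.log (1 + Real.exp (y - M)) + t ≤ K y := by
        rcases le_total y (x₁ - 1) with h | h
        · have h1 := hKb y h
          have h2 : t ≤ (Real.exp c' - 1) * Real.log (1 + Real.exp (y - M)) :=
            mul_le_mul_of_nonneg_left hΛmono (by linarith)
          nlinarith
        · have h1 := hKt y h
          have h2 : Real.log (1 + Real.exp (zhat - M)) ≤ Real.log (1 + Real.exp ((x₁-1) - M)) :=
            Real.log_le_log (by positivity)
              (by linarith [Real.exp_le_exp.2 (show zhat - M ≤ (x₁-1) - M by
                  linarith [min_le_left (x₁ - 1) (M + Real.log (Real.exp (c'/2) - 1))])])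
          have h3 : t ≤ (Real.exp c' - 1) * Real.log (1 + Real.exp ((x₁-1) - M)) :=
            mul_le_mul_of_nonneg_left h2 (by linarith)
          linarith
      have key : Real.exp (y - M + t) ≤ Real.exp (K y) - 1 := by
        have e1 : Real.exp (Real.log (1 + Real.exp (y - M)) + t) ≤ Real.exp (K y) :=
          Real.exp_le_exp.2 hKy
        have e2 : Real.exp (Real.log (1 + Real.exp (y - M)) + t) =
            (1 + Real.exp (y - M)) * Real.exp t := by
          rw [Real.exp_add, Real.exp_log (by positivity)]
        have e3 : Real.exp (y - M + t) = Real.exp (y - M) * Real.exp t := by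
          rw [← Real.exp_add]
        have ht1 : (1:ℝ) ≤ Real.exp t := by
          rw [← Real.exp_zero]; exact Real.exp_le_exp.2 htpos.le
        nlinarith [Real.exp_pos t]
      have h6 : y - M + t ≤ Real.log (Real.exp (K y) - 1) := by
        have := Real.log_le_log (Real.exp_pos _) key
        rwa [Real.log_exp] at this
      linarith [min_le_left t (c'/2)]
  have hne1 : (Set.range (hatT (Tmap (Tmap F)))).Nonempty := ⟨_, ⟨0, rfl⟩⟩
  constructor
  · have h := le_csInf hne1 (fun b hb => by
      obtain ⟨y, rfl⟩ := hb; exact hbound1 y)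
    have hmin : 0 < min s (c/2) := lt_min hspos (by linarith)
    linarith
  · have h := csSup_le hne1 (fun b hb => by
      obtain ⟨y, rfl⟩ := hb; exact hbound2 y)
    have hmin : 0 < min t (c'/2) := lt_min htpos (by linarith)
    linarith
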